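/- Let a > 0 and b > 0 be real numbers with ab < 1, and set μ = (1/b)·log(1/(ab)). Then a(e^{bμ} − 1) < μ. Consequently, the number λ₀ ≥ 0 characterized by {λ ≥ 0 : a(e^{bλ} − 1) ≤ λ} = [0, λ₀] satisfies λ₀ > (1/b)·log(1/(ab)). -/

import Mathlib

theorem lambda0_lower_bound_of_ab_lt_one (a b : ℝ) (ha : 0 < a) (hb : 0 < b)
    (hab : a * b < 1) :
    a * (Real.exp (b * ((1 / b) * Real.log (1 / (a * b)))) - 1) <
      (1 / b) * Real.log (1 / (a * b)) ∧
    ∀ lam0 : ℝ, 0 ≤ lam0 →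
      {l : ℝ | 0 ≤ l ∧ a * (Real.exp (b * l) - 1) ≤ l} = Set.Icc 0 lam0 →
      lam0 > (1 / b) * Real.log (1 / (a * b)) := by
  have hab0 : 0 < a * b := mul_pos ha hb
  have hbne : b ≠ 0 := ne_of_gt hb
  have hmu : b * ((1 / b) * Real.log (1 / (a * b))) = Real.log (1 / (a * b)) := by
    field_simp
  have hexp : Real.exp (b * ((1 / b) * Real.log (1 / (a * b)))) = 1 / (a * b) := by
    rw [hmu, Real.exp_log (by positivity)]
  -- key strict inequality
  have hlog : Real.log (a * b) < a * b - 1 :=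
    Real.log_lt_sub_one_of_pos hab0 (ne_of_lt hab)
  have hloginv : Real.log (1 / (a * b)) = - Real.log (a * b) := by
    rw [one_div, Real.log_inv]
  have hmain : a * (Real.exp (b * ((1 / b) * Real.log (1 / (a * b)))) - 1) <
      (1 / b) * Real.log (1 / (a * b)) := by
    rw [hexp, hloginv]
    have h1 : a * (1 / (a * b) - 1) = 1 / b - a := by field_simp
    rw [h1]
    rw [div_mul_eq_mul_div, lt_div_iff₀ hb, sub_mul, one_div_mul_cancel hbne]
    nlinarith [hlog]
  refine ⟨hmain, ?_⟩
  intro lam0 hlam0 hset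
  set μ := (1 / b) * Real.log (1 / (a * b)) with hμdef
  have hμ0 : 0 ≤ μ := by
    have : 0 ≤ Real.log (1 / (a * b)) := by
      apply Real.log_nonneg
      rw [le_div_iff₀ hab0]; linarith
    positivity
  have hμmem : μ ∈ Set.Icc 0 lam0 := by
    rw [← hset]; exact ⟨hμ0, le_of_lt hmain⟩
  have hμle : μ ≤ lam0 := hμmem.2
  rcases lt_or_eq_of_le hμle with h | h
  · exact h
  · exfalso
    -- lam0 = μ; use continuity to find a point slightly above μ in the set
    have hcont : Continuous (fun l : ℝ => a * (Real.exp (b * l) - 1) - l) := by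
      continuity
    have hopen : IsOpen {l : ℝ | a * (Real.exp (b * l) - 1) - l < 0} :=
      isOpen_lt hcont continuous_const
    have hμin : μ ∈ {l : ℝ | a * (Real.exp (b * l) - 1) - l < 0} := by
      simp only [Set.mem_setOf_eq]; linarith [hmain]
    rcases Metric.isOpen_iff.1 hopen μ hμin with ⟨ε, hε, hball⟩
    have hlin : a * (Real.exp (b * (μ + ε / 2)) - 1) - (μ + ε / 2) < 0 := by
      have := hball (show μ + ε / 2 ∈ Metric.ball μ ε by
        rw [Metric.mem_ball, Real.dist_eq, show μ + ε / 2 - μ = ε / 2 by ring,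
          abs_of_pos (by linarith)]
        linarith)
      simpa using this
    have hlset : μ + ε / 2 ∈ Set.Icc 0 lam0 := by
      rw [← hset]
      exact ⟨by linarith, by linarith⟩
    have h2 : μ + ε / 2 ≤ lam0 := hlset.2
    rw [← h] at h2
    linarith
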